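/- arXiv:2501.05445 — 6 statements merged into one kernel-verified Lean document; each statement's English description precedes it below -/
import Mathlib

section
/- Let d ≥ 1 and work in ℝ^d. Let α, σ : ℝ → ℝ with α s ≠ 0 for every s ∈ ℝ, let t ∈ ℝ, and let λ' ∈ ℝ be such that the function s ↦ σ s / α s has derivative λ' at t (HasDerivAt). Let ε_φ : ℝ^d → ℝ → ℝ^d be any function and ε̃ ∈ ℝ^d a fixed vector. Suppose x̂ : ℝ → ℝ^d satisfies the clean-flow ODE at t, i.e. HasDerivAt x̂ (λ' • (ε_φ (α t • x̂ t + σ t • ε̃) t − ε̃)) t. Define x : ℝ → ℝ^d by x s = α s • x̂ s + σ s • ε̃. Then HasDerivAt (fun s => (α s)⁻¹ • x s) (λ' • ε_φ (x t) t) t; that is, x satisfies the probability-flow ODE d(x_t/α_t) = d(σ_t/α_t) · ε_φ(x_t, t) at t. -/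
/-- Clean-flow ODE solution gives a PF-ODE solution (deterministic case of the
paper's Proposition "Clean flow SDE is equivalent to diffusion SDE"). -/
theorem clean_flow_to_pf_ode
    (d : ℕ) (hd : 1 ≤ d)
    (α σ : ℝ → ℝ) (hα : ∀ s, α s ≠ 0)
    (t lam' : ℝ)
    (hlam : HasDerivAt (fun s => σ s / α s) lam' t)
    (εφ : EuclideanSpace ℝ (Fin d) → ℝ → EuclideanSpace ℝ (Fin d))
    (εtil : EuclideanSpace ℝ (Fin d))
    (xhat x : ℝ → EuclideanSpace ℝ (Fin d))
    (hxhat : HasDerivAt xhat (lam' • (εφ (α t • xhat t + σ t • εtil) t - εtil)) t)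
    (hx : ∀ s, x s = α s • xhat s + σ s • εtil) :
    HasDerivAt (fun s => (α s)⁻¹ • x s) (lam' • εφ (x t) t) t := by
  have heq : (fun s => (α s)⁻¹ • x s) = fun s => xhat s + (σ s / α s) • εtil := by
    funext s
    rw [hx s, smul_add, smul_smul, smul_smul, inv_mul_cancel₀ (hα s), one_smul,
      div_eq_inv_mul]
  rw [heq, hx t]
  have h := hxhat.add (hlam.smul_const εtil)
  convert h using 1
  case e'_9 =>
    rw [smul_sub]
    abel
  all_goals rfl
end

section
/- Let d ≥ 1 and work in ℝ^d. Let α, σ : ℝ → ℝ, t ∈ ℝ with α t ≠ 0, and let λ' ∈ ℝ be such that the function s ↦ σ s / α s has derivative λ' at t (HasDerivAt). Let ε_φ : ℝ^d → ℝ → ℝ^d, ε̃ ∈ ℝ^d, and let x : ℝ → ℝ^d satisfy the probability-flow ODE at t, i.e. HasDerivAt (fun s => (α s)⁻¹ • x s) (λ' • ε_φ (x t) t) t. Define the clean variable x̂ : ℝ → ℝ^d by x̂ s = (α s)⁻¹ • (x s − σ s • ε̃). Then α t • x̂ t + σ t • ε̃ = x t, and HasDerivAt x̂ (λ' • (ε_φ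 (α t • x̂ t + σ t • ε̃) t − ε̃)) t; that is, x̂ satisfies the clean-flow ODE at t. -/
/-- The change of variable x̂ := (x − σ ε̃)/α turns a PF-ODE solution into a
clean-flow ODE solution (the paper's Eq. 7–9). -/
theorem pf_ode_to_clean_flow
    (d : ℕ) (hd : 1 ≤ d)
    (α σ : ℝ → ℝ) (t : ℝ) (hαt : α t ≠ 0)
    (lam' : ℝ)
    (hlam : HasDerivAt (fun s => σ s / α s) lam' t)
    (εφ : EuclideanSpace ℝ (Fin d) → ℝ → EuclideanSpace ℝ (Fin d))
    (εtil : EuclideanSpace ℝ (Fin d))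
    (x xhat : ℝ → EuclideanSpace ℝ (Fin d))
    (hx : HasDerivAt (fun s => (α s)⁻¹ • x s) (lam' • εφ (x t) t) t)
    (hxhat : ∀ s, xhat s = (α s)⁻¹ • (x s - σ s • εtil)) :
    α t • xhat t + σ t • εtil = x t ∧
      HasDerivAt xhat (lam' • (εφ (α t • xhat t + σ t • εtil) t - εtil)) t := by
  have heq : α t • xhat t + σ t • εtil = x t := by
    rw [hxhat t, smul_smul, mul_inv_cancel₀ hαt, one_smul]
    abel
  refine ⟨heq, ?_⟩
  rw [heq, smul_sub]
  have h := hx.sub (hlam.smul_const εtil)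
  refine h.congr_of_eventuallyEq (Filter.Eventually.of_forall fun s => ?_)
  simp only [hxhat s, smul_sub, div_eq_mul_inv, smul_smul, mul_comm, Pi.sub_apply]
end

section
/- Fix d ≥ 1 and real numbers α > 0, σ > 0. Let p₀ : ℝ^d → ℝ be measurable, nonnegative and Lebesgue-integrable with ∫ p₀ = 1. Define the Gaussian kernel K(x,y) = (2πσ²)^{−d/2} · exp(−‖x − α•y‖² / (2σ²)) and the smoothed density p(x) = ∫ K(x,y) · p₀(y) dy. Then p is differentiable at every x ∈ ℝ^d, the function y ↦ y • (K(x,y) · p₀(y)) is Bochner integrable for every x, and σ² • ∇p(x) + p(x) • x = α • ∫ y • (K(x,y) · p₀(y)) dy. In particular, at every x with p(x) > 0, the score satisfies σ² • ∇ log p(x) = −(x − α • m(x)) where m(x) = (1/p(x)) • ∫ y • (K(x,y) · p₀(y)) dy is the posterior mean E[x₀ | x]. -/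
set_option synthInstance.maxHeartbeats 1000000
set_option maxHeartbeats 1000000


open MeasureTheory Real

section GaussianSmoothingAux

open InnerProductSpace

variable {E : Type*} [NormedAddCommGroup E] [InnerProductSpace ℝ E]

lemma gaussian_smoothing_texp_le (σ t : ℝ) (hσ : 0 < σ) (ht : 0 ≤ t) :
    t * Real.exp (-t ^ 2 / (2 * σ ^ 2)) ≤ 2 * σ := by
  rcases le_or_gt t σ with h | h
  · have h1 : Real.exp (-t ^ 2 / (2 * σ ^ 2)) ≤ 1 := by
      rw [Real.exp_le_one_iff, neg_div]
      exact neg_nonpos.mpr (by positivity)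
    nlinarith
  · have ht0 : 0 < t := hσ.trans h
    have hu : 0 < t ^ 2 / (2 * σ ^ 2) := div_pos (pow_pos ht0 2) (by positivity)
    have h2 : t ^ 2 / (2 * σ ^ 2) ≤ Real.exp (t ^ 2 / (2 * σ ^ 2)) := by
      linarith [Real.add_one_le_exp (t ^ 2 / (2 * σ ^ 2))]
    have h3 : Real.exp (-t ^ 2 / (2 * σ ^ 2)) ≤ (t ^ 2 / (2 * σ ^ 2))⁻¹ := by
      rw [neg_div, Real.exp_neg]
      exact inv_anti₀ hu h2
    have h4 : t * Real.exp (-t ^ 2 / (2 * σ ^ 2)) ≤ t * (t ^ 2 / (2 * σ ^ 2))⁻¹ :=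
      mul_le_mul_of_nonneg_left h3 ht
    have h6 : t * (t ^ 2 / (2 * σ ^ 2))⁻¹ ≤ 2 * σ := by
      rw [inv_div, mul_div_assoc', div_le_iff₀ (pow_pos ht0 2)]
      nlinarith [mul_le_mul_of_nonneg_left h.le (by positivity : (0:ℝ) ≤ 2*σ*t)]
    linarith

lemma gaussian_smoothing_kernel_deriv (α σ : ℝ) (hσ : 0 < σ) (c : ℝ) (y x : E) :
    HasFDerivAt (fun x' : E => c * Real.exp (-‖x' - α • y‖ ^ 2 / (2 * σ ^ 2)))
      ((-(σ ^ 2)⁻¹ * (c * Real.exp (-‖x - α • y‖ ^ 2 / (2 * σ ^ 2)))) •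
        innerSL ℝ (x - α • y)) x := by
  have h1 : HasFDerivAt (fun x' : E => x' - α • y) (ContinuousLinearMap.id ℝ E) x :=
    (hasFDerivAt_id x).sub_const _
  have h2 := ((h1.inner ℝ h1).const_mul (-(2 * σ ^ 2)⁻¹)).exp.const_mul c
  have hfun : (fun x' : E => c * Real.exp (-‖x' - α • y‖ ^ 2 / (2 * σ ^ 2)))
      = fun x' : E => c * Real.exp (-(2 * σ ^ 2)⁻¹ * ⟪x' - α • y, x' - α • y⟫_ℝ) := by
    funext x'
    rw [real_inner_self_eq_norm_sq]
    ring_nf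
  rw [hfun]
  convert h2 using 1
  · rfl
  · rfl
  ext v
  simp only [ContinuousLinearMap.coe_smul', Pi.smul_apply, innerSL_apply_apply,
    ContinuousLinearMap.coe_comp', Function.comp_apply, ContinuousLinearMap.prod_apply,
    ContinuousLinearMap.coe_id', id_eq, fderivInnerCLM_apply, smul_eq_mul]
  rw [real_inner_self_eq_norm_sq, real_inner_comm v (x - α • y),
    show -(2 * σ ^ 2)⁻¹ * ‖x - α • y‖ ^ 2 = -‖x - α • y‖ ^ 2 / (2 * σ ^ 2) by ring]
  have hσ2 : σ ^ 2 ≠ 0 := by positivity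
  field_simp
  ring

end GaussianSmoothingAux

open InnerProductSpace in
/-- The paper's Lemma F.3 ("sample predictions are non-noisy images"): for the
Gaussian-smoothed density p(x) = ∫ K(x,y) p₀(y) dy, p is differentiable, the
posterior-mean integrand is integrable, σ² ∇p(x) + p(x) x = α ∫ y K(x,y) p₀(y) dy,
and at points where p > 0 the score satisfies σ² ∇ log p(x) = −(x − α m(x)). -/
theorem gaussian_smoothing_score_posterior_mean
    (d : ℕ) (hd : 1 ≤ d) (α σ : ℝ) (hα : 0 < α) (hσ : 0 < σ)
    (p₀ : EuclideanSpace ℝ (Fin d) → ℝ)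
    (hp₀meas : Measurable p₀) (hp₀nonneg : ∀ y, 0 ≤ p₀ y)
    (hp₀int : Integrable p₀) (hp₀mass : ∫ y, p₀ y = 1)
    (K : EuclideanSpace ℝ (Fin d) → EuclideanSpace ℝ (Fin d) → ℝ)
    (hK : ∀ x y, K x y =
      (2 * π * σ ^ 2) ^ (-(d : ℝ) / 2) * Real.exp (-‖x - α • y‖ ^ 2 / (2 * σ ^ 2)))
    (p : EuclideanSpace ℝ (Fin d) → ℝ)
    (hp : ∀ x, p x = ∫ y, K x y * p₀ y) :
    (∀ x, DifferentiableAt ℝ p x) ∧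
    (∀ x, Integrable (fun y => (K x y * p₀ y) • y)) ∧
    (∀ x, σ ^ 2 • gradient p x + p x • x = α • ∫ y, (K x y * p₀ y) • y) ∧
    (∀ x, 0 < p x →
      σ ^ 2 • gradient (fun z => Real.log (p z)) x =
        -(x - α • ((p x)⁻¹ • ∫ y, (K x y * p₀ y) • y))) := by
  classical
  have hσ2 : (0:ℝ) < σ ^ 2 := by positivity
  set c : ℝ := (2 * π * σ ^ 2) ^ (-(d : ℝ) / 2) with hc
  have hcpos : 0 < c := Real.rpow_pos_of_pos (by positivity) _
  have hKpos : ∀ x y : (EuclideanSpace ℝ (Fin d)), 0 < K x y := by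
    intro x y; rw [hK]; positivity
  have hKle : ∀ x y : (EuclideanSpace ℝ (Fin d)), K x y ≤ c := by
    intro x y; rw [hK]
    have : Real.exp (-‖x - α • y‖ ^ 2 / (2 * σ ^ 2)) ≤ 1 := by
      rw [Real.exp_le_one_iff, neg_div]
      exact neg_nonpos.mpr (by positivity)
    nlinarith
  have hKnorm : ∀ x y : (EuclideanSpace ℝ (Fin d)), ‖x - α • y‖ * K x y ≤ 2 * σ * c := by
    intro x y; rw [hK]
    have := gaussian_smoothing_texp_le σ ‖x - α • y‖ hσ (norm_nonneg _)
    nlinarith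
  have hKcont : ∀ x : (EuclideanSpace ℝ (Fin d)), Continuous fun y => K x y := by
    intro x
    have : (fun y : (EuclideanSpace ℝ (Fin d)) => K x y)
        = fun y : (EuclideanSpace ℝ (Fin d)) => c * Real.exp (-‖x - α • y‖ ^ 2 / (2 * σ ^ 2)) := by
      funext y; rw [hK]
    rw [this]
    fun_prop
  have hderiv : ∀ (y x : (EuclideanSpace ℝ (Fin d))), HasFDerivAt (fun x' => K x' y)
      ((-(σ ^ 2)⁻¹ * K x y) • innerSL ℝ (x - α • y)) x := by
    intro y x
    have hfun : (fun x' : (EuclideanSpace ℝ (Fin d)) => K x' y)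
        = fun x' : (EuclideanSpace ℝ (Fin d)) => c * Real.exp (-‖x' - α • y‖ ^ 2 / (2 * σ ^ 2)) := by
      funext x'; rw [hK]
    rw [hfun, hK]
    exact gaussian_smoothing_kernel_deriv α σ hσ c y x
  have hFmeas : ∀ x : (EuclideanSpace ℝ (Fin d)), AEStronglyMeasurable (fun y => K x y * p₀ y) volume :=
    fun x => ((hKcont x).aestronglyMeasurable).mul hp₀meas.aestronglyMeasurable
  have hFint : ∀ x : (EuclideanSpace ℝ (Fin d)), Integrable (fun y => K x y * p₀ y) := by
    intro x
    refine (hp₀int.const_mul c).mono' (hFmeas x) (Filter.Eventually.of_forall fun y => ?_)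
    rw [Real.norm_eq_abs, abs_of_nonneg (mul_nonneg (hKpos x y).le (hp₀nonneg y))]
    exact mul_le_mul_of_nonneg_right (hKle x y) (hp₀nonneg y)
  -- integrability of the posterior-mean integrand
  have hIint : ∀ x : (EuclideanSpace ℝ (Fin d)), Integrable (fun y => (K x y * p₀ y) • y) := by
    intro x
    refine (hp₀int.const_mul ((2 * σ * c + ‖x‖ * c) / α)).mono'
      ((hFmeas x).smul aestronglyMeasurable_id) (Filter.Eventually.of_forall fun y => ?_)
    rw [norm_smul, Real.norm_eq_abs, abs_of_nonneg (mul_nonneg (hKpos x y).le (hp₀nonneg y))]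
    rw [div_mul_eq_mul_div, le_div_iff₀ hα]
    have h1 : α * ‖y‖ ≤ ‖x - α • y‖ + ‖x‖ := by
      have h2 : ‖α • y‖ ≤ ‖x‖ + ‖x - α • y‖ := by
        calc ‖α • y‖ = ‖x - (x - α • y)‖ := by congr 1; abel
          _ ≤ ‖x‖ + ‖x - α • y‖ := norm_sub_le _ _
      rw [norm_smul, Real.norm_eq_abs, abs_of_pos hα] at h2
      linarith
    have h2 : α * ‖y‖ * K x y ≤ 2 * σ * c + ‖x‖ * c := by
      have h3 := mul_le_mul_of_nonneg_right h1 (hKpos x y).le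
      have h4 := mul_le_mul_of_nonneg_left (hKle x y) (norm_nonneg x)
      nlinarith [hKnorm x y]
    nlinarith [mul_le_mul_of_nonneg_right h2 (hp₀nonneg y), hp₀nonneg y,
      mul_nonneg (mul_nonneg (hKpos x y).le (hp₀nonneg y)) (norm_nonneg y)]
  -- the gradient of p
  set Gr : (EuclideanSpace ℝ (Fin d)) → (EuclideanSpace ℝ (Fin d)) := fun x => ∫ y, (-(σ ^ 2)⁻¹ * K x y * p₀ y) • (x - α • y) with hGr
  have hgint : ∀ x : (EuclideanSpace ℝ (Fin d)), Integrable (fun y => (-(σ ^ 2)⁻¹ * K x y * p₀ y) • (x - α • y)) := by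
    intro x
    refine (hp₀int.const_mul ((σ ^ 2)⁻¹ * (2 * σ * c))).mono' ?_
      (Filter.Eventually.of_forall fun y => ?_)
    · exact ((((hKcont x).measurable.const_mul _).mul hp₀meas).aestronglyMeasurable).smul
        (Continuous.aestronglyMeasurable (by fun_prop))
    · rw [norm_smul, Real.norm_eq_abs]
      rw [show -(σ ^ 2)⁻¹ * K x y * p₀ y = -((σ ^ 2)⁻¹ * K x y * p₀ y) by ring, abs_neg,
        abs_of_nonneg (mul_nonneg (mul_nonneg (inv_nonneg.mpr hσ2.le) (hKpos x y).le) (hp₀nonneg y))]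
      have := mul_le_mul_of_nonneg_right (hKnorm x y) (hp₀nonneg y)
      have h5 : (σ ^ 2)⁻¹ * K x y * p₀ y * ‖x - α • y‖
          ≤ (σ ^ 2)⁻¹ * (2 * σ * c) * p₀ y := by
        rw [show (σ ^ 2)⁻¹ * K x y * p₀ y * ‖x - α • y‖
            = (σ ^ 2)⁻¹ * (‖x - α • y‖ * K x y * p₀ y) by ring,
          show (σ ^ 2)⁻¹ * (2 * σ * c) * p₀ y = (σ ^ 2)⁻¹ * (2 * σ * c * p₀ y) by ring]
        exact mul_le_mul_of_nonneg_left this (inv_nonneg.mpr hσ2.le)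
      exact h5
  have hgradp : ∀ x : (EuclideanSpace ℝ (Fin d)), HasGradientAt p (Gr x) x := by
    intro x₀
    set F' : (EuclideanSpace ℝ (Fin d)) → (EuclideanSpace ℝ (Fin d)) → (EuclideanSpace ℝ (Fin d)) →L[ℝ] ℝ :=
      fun x y => p₀ y • ((-(σ ^ 2)⁻¹ * K x y) • innerSL ℝ (x - α • y)) with hF'
    have hF'norm : ∀ (x y : (EuclideanSpace ℝ (Fin d))), ‖F' x y‖ ≤ (σ ^ 2)⁻¹ * (2 * σ * c) * p₀ y := by
      intro x y
      have hstep : ‖F' x y‖ ≤ p₀ y * ((σ ^ 2)⁻¹ * K x y * ‖x - α • y‖) := by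
        calc ‖F' x y‖ ≤ ‖p₀ y‖ * ‖(-(σ ^ 2)⁻¹ * K x y) • innerSL ℝ (x - α • y)‖ :=
              ContinuousLinearMap.opNorm_smul_le _ _
          _ ≤ ‖p₀ y‖ * (‖-(σ ^ 2)⁻¹ * K x y‖ * ‖innerSL ℝ (x - α • y)‖) :=
              mul_le_mul_of_nonneg_left (ContinuousLinearMap.opNorm_smul_le _ _)
                (norm_nonneg _)
          _ = p₀ y * ((σ ^ 2)⁻¹ * K x y * ‖x - α • y‖) := by
              rw [innerSL_apply_norm, Real.norm_eq_abs, Real.norm_eq_abs,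
                abs_of_nonneg (hp₀nonneg y),
                show -(σ ^ 2)⁻¹ * K x y = -((σ ^ 2)⁻¹ * K x y) by ring, abs_neg,
                abs_of_nonneg (mul_nonneg (inv_nonneg.mpr hσ2.le) (hKpos x y).le)]
      refine hstep.trans ?_
      have := mul_le_mul_of_nonneg_right (hKnorm x y) (hp₀nonneg y)
      calc p₀ y * ((σ ^ 2)⁻¹ * K x y * ‖x - α • y‖)
          = (σ ^ 2)⁻¹ * (‖x - α • y‖ * K x y * p₀ y) := by ring
        _ ≤ (σ ^ 2)⁻¹ * (2 * σ * c * p₀ y) :=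
            mul_le_mul_of_nonneg_left this (inv_nonneg.mpr hσ2.le)
        _ = (σ ^ 2)⁻¹ * (2 * σ * c) * p₀ y := by ring
    have hF'meas : AEStronglyMeasurable (F' x₀) volume := by
      refine hp₀meas.aestronglyMeasurable.smul (Continuous.aestronglyMeasurable ?_)
      exact Continuous.smul (continuous_const.mul (hKcont x₀))
        ((innerSL ℝ).continuous.comp (continuous_const.sub (continuous_const_smul α)))
    have hF'int : Integrable (F' x₀) := by
      refine (hp₀int.const_mul ((σ ^ 2)⁻¹ * (2 * σ * c))).mono' hF'meas
        (Filter.Eventually.of_forall fun y => hF'norm x₀ y)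
    have key := hasFDerivAt_integral_of_dominated_of_fderiv_le
      (F := fun x y => K x y * p₀ y) (F' := F') (x₀ := x₀)
      (bound := fun y => (σ ^ 2)⁻¹ * (2 * σ * c) * p₀ y)
      (s := Set.univ) Filter.univ_mem (Filter.Eventually.of_forall fun x => hFmeas x) (hFint x₀) hF'meas
      (Filter.Eventually.of_forall fun y x _ => hF'norm x y)
      (hp₀int.const_mul _)
      (Filter.Eventually.of_forall fun y x _ => by
        simpa [hF', smul_smul, mul_comm] using (hderiv y x).mul_const (p₀ y))
    have hpfun : p = fun x => ∫ y, K x y * p₀ y := funext hp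
    rw [← hpfun] at key
    -- identify ∫ F' x₀ with toDual of Gr x₀
    have hdual : (∫ y, F' x₀ y) = (toDual ℝ (EuclideanSpace ℝ (Fin d))) (Gr x₀) := by
      refine ContinuousLinearMap.ext fun v => ?_
      have hL : (∫ y, F' x₀ y) v = ∫ y, (F' x₀ y) v :=
        ContinuousLinearMap.integral_apply hF'int v
      have hR : (toDual ℝ (EuclideanSpace ℝ (Fin d))) (Gr x₀) v
          = ∫ y, ⟪v, (-(σ ^ 2)⁻¹ * K x₀ y * p₀ y) • (x₀ - α • y)⟫_ℝ := by
        have h1 : ((toDual ℝ (EuclideanSpace ℝ (Fin d))) (Gr x₀)) v = ⟪Gr x₀, v⟫_ℝ :=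
          toDual_apply_apply
        rw [h1, real_inner_comm v (Gr x₀), hGr]
        exact (integral_inner (𝕜 := ℝ) (hgint x₀) v).symm
      rw [hL, hR]
      congr 1
      funext y
      simp only [hF', ContinuousLinearMap.coe_smul', Pi.smul_apply, innerSL_apply_apply, smul_eq_mul,
        real_inner_smul_right]
      rw [real_inner_comm]
      ring
    rw [hdual] at key
    exact (hasGradientAt_iff_hasFDerivAt).2 key
  -- the main algebraic identity
  have hmain : ∀ x : (EuclideanSpace ℝ (Fin d)), σ ^ 2 • Gr x = α • (∫ y, (K x y * p₀ y) • y) - p x • x := by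
    intro x
    have hpt : ∀ y : (EuclideanSpace ℝ (Fin d)), σ ^ 2 • ((-(σ ^ 2)⁻¹ * K x y * p₀ y) • (x - α • y))
        = α • ((K x y * p₀ y) • y) - (K x y * p₀ y) • x := by
      intro y
      rw [smul_smul, show σ ^ 2 * (-(σ ^ 2)⁻¹ * K x y * p₀ y) = -(K x y * p₀ y) by
        field_simp]
      rw [neg_smul, smul_sub, neg_sub, smul_smul, mul_comm (K x y * p₀ y) α,
        ← smul_smul]
    calc σ ^ 2 • Gr x = ∫ y, σ ^ 2 • ((-(σ ^ 2)⁻¹ * K x y * p₀ y) • (x - α • y)) := by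
          rw [hGr, ← integral_smul]
      _ = ∫ y, (α • ((K x y * p₀ y) • y) - (K x y * p₀ y) • x) := by
          simp_rw [hpt]
      _ = α • (∫ y, (K x y * p₀ y) • y) - p x • x := by
          have h1 : Integrable (fun y => α • ((K x y * p₀ y) • y)) := (hIint x).smul α
          have h2 : Integrable (fun y => (K x y * p₀ y) • x) := (hFint x).smul_const x
          rw [integral_sub h1 h2, integral_smul, integral_smul_const, hp x]
  refine ⟨fun x => (hgradp x).differentiableAt, hIint, fun x => ?_, fun x hpos => ?_⟩
  · rw [(hgradp x).gradient, hmain x, sub_add_cancel]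
  · have hne : p x ≠ 0 := ne_of_gt hpos
    have hfd := (hgradp x).hasFDerivAt
    have hlog := (Real.hasDerivAt_log hne).comp_hasFDerivAt x hfd
    have hsm : (p x)⁻¹ • (toDual ℝ (EuclideanSpace ℝ (Fin d))) (Gr x) = (toDual ℝ (EuclideanSpace ℝ (Fin d))) ((p x)⁻¹ • Gr x) := by
      refine ContinuousLinearMap.ext fun v => ?_
      simp only [ContinuousLinearMap.coe_smul', Pi.smul_apply, toDual_apply_apply, smul_eq_mul,
        real_inner_smul_left]
    rw [hsm] at hlog
    have hgradlog : HasGradientAt (fun z => Real.log (p z)) ((p x)⁻¹ • Gr x) x :=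
      (hasGradientAt_iff_hasFDerivAt).2 hlog
    rw [hgradlog.gradient]
    rw [smul_comm (σ ^ 2) ((p x)⁻¹), hmain x, smul_sub, ← smul_assoc, smul_eq_mul,
      inv_smul_smul₀ hne, neg_sub, mul_comm ((p x)⁻¹) α, ← smul_smul]
end

section
/- Define T : ℝ × ℝ → ℝ × ℝ by T(θ, φ) = (Real.sqrt (1 − Real.cos θ), Real.sqrt (1 − Real.cos θ) · (4·φ/π − 1)). For every θ ∈ (0, π) and every φ ∈ ℝ, T is differentiable at (θ, φ) and the determinant of its Fréchet derivative equals (2/π) · Real.sin θ; in particular this determinant is strictly positive, and the area element transforms as dx_r dy_r = (2/π) sin θ dθ dφ. -/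
open Real

/-- The paper's warping function 𝒯⁻¹ (Eq. 20, case φ ∈ [0, π/2)) has Jacobian
determinant (2/π)·sin θ, which is strictly positive for θ ∈ (0, π): points
uniformly scattered on the sphere remain uniform in the reference space. -/
theorem warping_jacobian_det
    (T : ℝ × ℝ → ℝ × ℝ)
    (hT : ∀ θ φ : ℝ, T (θ, φ) =
      (Real.sqrt (1 - Real.cos θ),
        Real.sqrt (1 - Real.cos θ) * (4 * φ / π - 1))) :
    ∀ θ ∈ Set.Ioo (0 : ℝ) π, ∀ φ : ℝ,
      DifferentiableAt ℝ T (θ, φ) ∧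
      (fderiv ℝ T (θ, φ)).det = (2 / π) * Real.sin θ ∧
      0 < (2 / π) * Real.sin θ := by
  intro θ hθ φ
  obtain ⟨hθ0, hθπ⟩ := hθ
  have hsin : 0 < Real.sin θ := Real.sin_pos_of_pos_of_lt_pi hθ0 hθπ
  have hcos : Real.cos θ < 1 := by
    nlinarith [Real.sin_sq_add_cos_sq θ, mul_pos hsin hsin, sq_nonneg (Real.cos θ + 1)]
  have hpos : 0 < 1 - Real.cos θ := by linarith
  have hsq : Real.sqrt (1 - Real.cos θ) ≠ 0 := by positivity
  set a : ℝ := Real.sin θ / (2 * Real.sqrt (1 - Real.cos θ)) with ha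
  set b : ℝ := Real.sqrt (1 - Real.cos θ) with hb
  -- derivative of g θ = sqrt (1 - cos θ)
  have hg : HasDerivAt (fun t => Real.sqrt (1 - Real.cos t)) a θ := by
    have h1 : HasDerivAt (fun t => 1 - Real.cos t) (Real.sin θ) θ := by
      simpa using ((Real.hasDerivAt_cos θ).const_sub 1)
    simpa [ha] using h1.sqrt (ne_of_gt hpos)
  have hTeq : T = fun p : ℝ × ℝ =>
      (Real.sqrt (1 - Real.cos p.1),
        Real.sqrt (1 - Real.cos p.1) * (4 * p.2 / π - 1)) := by
    funext p; cases p with | mk x y => exact hT x y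
  have hfst : HasFDerivAt (fun p : ℝ × ℝ => Real.sqrt (1 - Real.cos p.1))
      (a • ContinuousLinearMap.fst ℝ ℝ ℝ) (θ, φ) := by
    have := hg.hasFDerivAt.comp (θ, φ) (hasFDerivAt_fst (𝕜 := ℝ) (p := (θ, φ)))
    convert this using 1
    all_goals (ext <;> simp [ContinuousLinearMap.smulRight])

  have hlin : HasFDerivAt (fun p : ℝ × ℝ => 4 * p.2 / π - 1)
      ((4 / π) • ContinuousLinearMap.snd ℝ ℝ ℝ) (θ, φ) := by
    have h2 : HasFDerivAt (fun p : ℝ × ℝ => p.2) (ContinuousLinearMap.snd ℝ ℝ ℝ) (θ, φ) :=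
      hasFDerivAt_snd
    have heq : (fun p : ℝ × ℝ => 4 * p.2 / π - 1) = fun p => (4 / π) * p.2 - 1 := by
      funext p; ring
    rw [heq]
    exact (h2.const_mul (4 / π)).sub_const 1
  have hsnd : HasFDerivAt (fun p : ℝ × ℝ =>
      Real.sqrt (1 - Real.cos p.1) * (4 * p.2 / π - 1))
      (b • ((4 / π) • ContinuousLinearMap.snd ℝ ℝ ℝ)
        + (4 * φ / π - 1) • (a • ContinuousLinearMap.fst ℝ ℝ ℝ)) (θ, φ) :=
    hfst.mul hlin
  set L : ℝ × ℝ →L[ℝ] ℝ × ℝ :=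
    (a • ContinuousLinearMap.fst ℝ ℝ ℝ).prod
      (b • ((4 / π) • ContinuousLinearMap.snd ℝ ℝ ℝ)
        + (4 * φ / π - 1) • (a • ContinuousLinearMap.fst ℝ ℝ ℝ)) with hL
  have hder : HasFDerivAt T L (θ, φ) := by
    rw [hTeq]
    exact hfst.prodMk hsnd
  have hdiff : DifferentiableAt ℝ T (θ, φ) := hder.differentiableAt
  refine ⟨hdiff, ?_, ?_⟩
  · rw [hder.fderiv]
    have hdet : L.det = Matrix.det (LinearMap.toMatrix (Module.Basis.finTwoProd ℝ)
        (Module.Basis.finTwoProd ℝ) (L : ℝ × ℝ →ₗ[ℝ] ℝ × ℝ)) := by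
      rw [LinearMap.det_toMatrix]
    rw [hdet, Matrix.det_fin_two]
    simp [LinearMap.toMatrix_apply, hL, Module.Basis.finTwoProd_zero, Module.Basis.finTwoProd_one]
    rw [ha, hb]
    field_simp
    ring
  · have hπ : 0 < π := Real.pi_pos
    positivity
end

section
/- Define T : ℝ × ℝ → ℝ × ℝ by T(θ, φ) = (Real.sqrt (1 − Real.cos θ), Real.sqrt (1 − Real.cos θ) · (4·φ/π − 1)), and let S = (0, π) × (0, π/2) ⊆ ℝ × ℝ. Then T is injective on S, and for every function f : ℝ × ℝ → ℝ, the change-of-variables formula holds with respect to 2-dimensional Lebesgue measure: ∫_{T '' S} f(x, y) d(x,y) = ∫_S ((2/π) · Real.sin θ) · f (T (θ, φ)) d(θ,φ). -/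
open Real MeasureTheory

/-- Change of variables for the paper's warping function 𝒯⁻¹ (Appendix D): T is
injective on S = (0,π) × (0,π/2) and carries the measure (2/π)·sin θ dθ dφ on S
to Lebesgue measure on T '' S. -/
theorem warping_change_of_variables
    (T : ℝ × ℝ → ℝ × ℝ)
    (hT : ∀ θ φ : ℝ, T (θ, φ) =
      (Real.sqrt (1 - Real.cos θ),
        Real.sqrt (1 - Real.cos θ) * (4 * φ / π - 1)))
    (S : Set (ℝ × ℝ)) (hS : S = Set.Ioo (0 : ℝ) π ×ˢ Set.Ioo (0 : ℝ) (π / 2)) :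
    Set.InjOn T S ∧
    ∀ f : ℝ × ℝ → ℝ,
      (∫ q in T '' S, f q) = ∫ q in S, ((2 / π) * Real.sin q.1) * f (T q) := by
  have hπ : (0 : ℝ) < π := Real.pi_pos
  -- positivity of 1 - cos θ on (0, π)
  have hc : ∀ θ : ℝ, θ ∈ Set.Ioo (0 : ℝ) π → 0 < 1 - Real.cos θ := by
    intro θ hθ
    have h1 : Real.cos θ < Real.cos 0 :=
      Real.strictAntiOn_cos ⟨le_refl 0, le_of_lt hπ⟩
        ⟨le_of_lt hθ.1, le_of_lt hθ.2⟩ hθ.1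
    rw [Real.cos_zero] at h1
    linarith
  -- injectivity
  have hinj : Set.InjOn T S := by
    rintro ⟨θ₁, φ₁⟩ h₁ ⟨θ₂, φ₂⟩ h₂ heq
    rw [hS] at h₁ h₂
    obtain ⟨hθ₁, hφ₁⟩ := h₁
    obtain ⟨hθ₂, hφ₂⟩ := h₂
    rw [hT, hT] at heq
    have h1 : Real.sqrt (1 - Real.cos θ₁) = Real.sqrt (1 - Real.cos θ₂) :=
      congrArg Prod.fst heq
    have hcc : Real.cos θ₁ = Real.cos θ₂ := by
      have := (Real.sqrt_inj (le_of_lt (hc θ₁ hθ₁)) (le_of_lt (hc θ₂ hθ₂))).1 h1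
      linarith
    have hθ : θ₁ = θ₂ :=
      Real.injOn_cos ⟨le_of_lt hθ₁.1, le_of_lt hθ₁.2⟩ ⟨le_of_lt hθ₂.1, le_of_lt hθ₂.2⟩ hcc
    have hx : (0 : ℝ) < Real.sqrt (1 - Real.cos θ₁) := Real.sqrt_pos.2 (hc θ₁ hθ₁)
    have h2 : Real.sqrt (1 - Real.cos θ₁) * (4 * φ₁ / π - 1) =
        Real.sqrt (1 - Real.cos θ₂) * (4 * φ₂ / π - 1) := congrArg Prod.snd heq
    rw [← hθ] at h2
    have h3 : 4 * φ₁ / π - 1 = 4 * φ₂ / π - 1 := mul_left_cancel₀ (ne_of_gt hx) h2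
    have hφ : φ₁ = φ₂ := by
      field_simp at h3
      linarith
    exact Prod.ext hθ hφ
  refine ⟨hinj, fun f => ?_⟩
  -- the derivative
  set B : ℝ × ℝ → ℝ × ℝ →L[ℝ] ℝ × ℝ := fun p =>
    LinearMap.toContinuousLinearMap (Matrix.toLin (Module.Basis.finTwoProd ℝ) (Module.Basis.finTwoProd ℝ)
      !![Real.sin p.1 / (2 * Real.sqrt (1 - Real.cos p.1)), 0;
         Real.sin p.1 / (2 * Real.sqrt (1 - Real.cos p.1)) * (4 * p.2 / π - 1),
         Real.sqrt (1 - Real.cos p.1) * (4 / π)]) with hB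
  have hmeas : MeasurableSet S := by
    rw [hS]; exact measurableSet_Ioo.prod measurableSet_Ioo
  have hTfun : T = fun p : ℝ × ℝ =>
      (Real.sqrt (1 - Real.cos p.1),
        Real.sqrt (1 - Real.cos p.1) * (4 * p.2 / π - 1)) := by
    funext p
    exact hT p.1 p.2
  have hderiv : ∀ p ∈ S, HasFDerivWithinAt T (B p) S p := by
    rintro ⟨θ, φ⟩ hp
    rw [hS] at hp
    have hcθ : (0 : ℝ) < 1 - Real.cos θ := hc θ hp.1
    have hsqrt : HasDerivAt (fun x : ℝ => Real.sqrt (1 - Real.cos x))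
        (Real.sin θ / (2 * Real.sqrt (1 - Real.cos θ))) θ := by
      have h1 : HasDerivAt (fun x : ℝ => 1 - Real.cos x) (Real.sin θ) θ := by
        simpa using (Real.hasDerivAt_cos θ).const_sub 1
      exact h1.sqrt (ne_of_gt hcθ)
    have hfst : HasFDerivAt (fun p : ℝ × ℝ => Real.sqrt (1 - Real.cos p.1))
        ((Real.sin θ / (2 * Real.sqrt (1 - Real.cos θ))) •
          ContinuousLinearMap.fst ℝ ℝ ℝ) (θ, φ) := by
      exact hsqrt.comp_hasFDerivAt (f := (Prod.fst : ℝ × ℝ → ℝ)) (θ, φ) hasFDerivAt_fst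
    have hlin : HasFDerivAt (fun p : ℝ × ℝ => 4 * p.2 / π - 1)
        ((4 / π) • ContinuousLinearMap.snd ℝ ℝ ℝ) (θ, φ) := by
      have heqfun : (fun p : ℝ × ℝ => 4 * p.2 / π - 1) =
          fun p : ℝ × ℝ => (4 / π) * p.2 - 1 := by
        funext p; ring
      rw [heqfun]
      exact ((hasFDerivAt_snd (𝕜 := ℝ) (E := ℝ) (F := ℝ)
        (p := (θ, φ))).const_mul (4 / π)).sub_const 1
    have hsnd : HasFDerivAt
        (fun p : ℝ × ℝ => Real.sqrt (1 - Real.cos p.1) * (4 * p.2 / π - 1))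
        (Real.sqrt (1 - Real.cos θ) • ((4 / π) • ContinuousLinearMap.snd ℝ ℝ ℝ) +
          (4 * φ / π - 1) •
            ((Real.sin θ / (2 * Real.sqrt (1 - Real.cos θ))) •
              ContinuousLinearMap.fst ℝ ℝ ℝ)) (θ, φ) :=
      hfst.mul hlin
    have hprod := HasFDerivAt.prodMk hfst hsnd
    rw [← hTfun] at hprod
    apply HasFDerivAt.hasFDerivWithinAt
    refine HasFDerivAt.congr_fderiv hprod ?_
    rw [hB]
    apply ContinuousLinearMap.ext
    rintro ⟨a, b⟩
    simp [Matrix.toLin_finTwoProd_apply, Prod.ext_iff]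
    ring
  -- determinant
  have hdet : ∀ p ∈ S, (B p).det = (2 / π) * Real.sin p.1 := by
    rintro ⟨θ, φ⟩ hp
    rw [hS] at hp
    have hcθ : (0 : ℝ) < 1 - Real.cos θ := hc θ hp.1
    have hsq : Real.sqrt (1 - Real.cos θ) ≠ 0 :=
      ne_of_gt (Real.sqrt_pos.2 hcθ)
    rw [hB]
    simp only [LinearMap.det_toContinuousLinearMap, LinearMap.det_toLin,
      Matrix.det_fin_two_of]
    field_simp
    ring
  -- change of variables
  rw [integral_image_eq_integral_abs_det_fderiv_smul volume hmeas hderiv hinj f]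
  apply setIntegral_congr_fun hmeas
  intro p hp
  have hsin : 0 < Real.sin p.1 := by
    rw [hS] at hp
    exact Real.sin_pos_of_pos_of_lt_pi hp.1.1 hp.1.2
  show |(B p).det| • f (T p) = (2 / π) * Real.sin p.1 * f (T p)
  rw [hdet p hp, smul_eq_mul, abs_of_pos (by positivity)]
end

section
/- Let d ≥ 1 and work in ℝ^d. Let α, σ : ℝ → ℝ, t ∈ ℝ with α t ≠ 0, and suppose α has derivative α' at t and σ has derivative σ' at t (HasDerivAt). Let x : ℝ → ℝ^d and e ∈ ℝ^d. Then the following are equivalent: (i) HasDerivAt x ((α'/α t) • x t + (σ' − σ t · α'/α t) • e) t; (ii) HasDerivAt (fun s => (α s)⁻¹ • x s) (((σ'·α t − σ t·α')/(α t)^2) • e) t. Moreover (σ'·α t − σ t·α')/(α t)^2 is the derivative of s ↦ σ s / α s at t, so (ii) reads d(x_t/α_t)/dt = (d(σ_t/α_t)/dt) · e. -/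
/-- Equivalence of the standard probability-flow ODE form
dx/dt = (α'/α)x + (σ' − σα'/α)·e and the paper's rewritten form
d(x/α)/dt = (d(σ/α)/dt)·e (Eq. 3–4), together with the identification of
(σ'α − σα')/α² as the derivative of σ/α. -/
theorem pf_ode_forms_equivalent
    (d : ℕ) (hd : 1 ≤ d)
    (α σ : ℝ → ℝ) (t : ℝ) (hαt : α t ≠ 0)
    (α' σ' : ℝ) (hα : HasDerivAt α α' t) (hσ : HasDerivAt σ σ' t)
    (x : ℝ → EuclideanSpace ℝ (Fin d)) (e : EuclideanSpace ℝ (Fin d)) :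
    (HasDerivAt x ((α' / α t) • x t + (σ' - σ t * α' / α t) • e) t ↔
      HasDerivAt (fun s => (α s)⁻¹ • x s)
        (((σ' * α t - σ t * α') / (α t) ^ 2) • e) t) ∧
    HasDerivAt (fun s => σ s / α s) ((σ' * α t - σ t * α') / (α t) ^ 2) t := by
  have hinv : HasDerivAt (fun s => (α s)⁻¹) (-α' / (α t) ^ 2) t := hα.inv hαt
  constructor
  · constructor
    · intro hx
      have h := hinv.smul hx
      have h' : HasDerivAt (fun s => (α s)⁻¹ • x s) ((α t)⁻¹ • ((α' / α t) • x t +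
          (σ' - σ t * α' / α t) • e) + (-α' / α t ^ 2) • x t) t := h
      convert h' using 1
      match_scalars
      · field_simp
      · field_simp
        ring
    · intro hy
      have hne : ∀ᶠ s in nhds t, α s ≠ 0 :=
        hα.continuousAt.eventually_ne hαt
      have h := hα.smul hy
      have heq : (fun s => α s • (α s)⁻¹ • x s) =ᶠ[nhds t] x := by
        filter_upwards [hne] with s hs
        simp [smul_smul, mul_inv_cancel₀ hs]
      have hx : HasDerivAt x
          (α t • ((σ' * α t - σ t * α') / (α t) ^ 2) • e +
            α' • (α t)⁻¹ • x t) t := h.congr_of_eventuallyEq heq.symm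
      convert hx using 1
      match_scalars
      all_goals field_simp
      all_goals ring
  · exact hσ.div hα hαt
end
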